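/- Let a ≥ b be integers and let ς : [-∞,∞] → [0,1] be an order-preserving homeomorphism. For every point p ∈ J(a,b), the restriction of s_{ab} to the fiber δ_{ab}^{-1}(p) ⊆ K(a;b) is a bijection onto the interval [b,a]; being a continuous bijection from a compact space to a Hausdorff space, it is moreover a homeomorphism, so every fiber of δ_{ab} is homeomorphic to the closed interval [b,a]. -/

import Mathlib

open scoped ENNReal

noncomputable section

namespace JKFlow

/-- `J(m,n) := ∏_{j ∈ ℤ, n < j < m} [0,∞]`, with the product topology. -/
abbrev Jspace (m n : ℤ) : Type :=
  {j : ℤ // n < j ∧ j < m} → ℝ≥0∞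

/-- The boundary `∂J(m,n)`: points with at least one coordinate equal to `∞`. -/
def JBoundary (m n : ℤ) : Set (Jspace m n) :=
  {z | ∃ j, z j = ∞}

/-- The ambient product containing `K(a;b)`. -/
abbrev KAmb (a b : ℤ) : Type :=
  ({j : ℤ // b ≤ j ∧ j < a} → ℝ≥0∞) × ({j : ℤ // b < j ∧ j ≤ a} → ℝ≥0∞)

/-- `K(a;b)` as a subset of the ambient product: the pairs `(x,y)` such that for some
integer `r` with `b ≤ r ≤ a` one has `x_j = 0` for `j < r` and `y_j = 0` for `j > r`. -/
def KSet (a b : ℤ) : Set (KAmb a b) :=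
  {k | ∃ r : ℤ, b ≤ r ∧ r ≤ a ∧
    (∀ j : {j : ℤ // b ≤ j ∧ j < a}, (j : ℤ) < r → k.1 j = 0) ∧
    (∀ j : {j : ℤ // b < j ∧ j ≤ a}, r < (j : ℤ) → k.2 j = 0)}

/-- The boundary `∂K(a;b)`: points with at least one coordinate equal to `∞`. -/
def KBoundary (a b : ℤ) : Set (KAmb a b) :=
  {k | (∃ j, k.1 j = ∞) ∨ (∃ j, k.2 j = ∞)}

/-- The map `δ_{ab} : K(a;b) → J(a,b)`, `δ(x,y)_j = x_j + y_j` for `b < j < a`. -/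
def deltaMap (a b : ℤ) (k : KAmb a b) : Jspace a b :=
  fun j => k.1 ⟨j.1, j.2.1.le, j.2.2⟩ + k.2 ⟨j.1, j.2.1, j.2.2.le⟩

/-- The first coordinate family of a point of `K(a;b)`, extended by `0` to all of `ℤ`. -/
def Xext (a b : ℤ) (k : KAmb a b) (j : ℤ) : ℝ≥0∞ :=
  if h : b ≤ j ∧ j < a then k.1 ⟨j, h⟩ else 0

/-- The second coordinate family of a point of `K(a;b)`, extended by `0` to all of `ℤ`. -/
def Yext (a b : ℤ) (k : KAmb a b) (j : ℤ) : ℝ≥0∞ :=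
  if h : b < j ∧ j ≤ a then k.2 ⟨j, h⟩ else 0

/-- The composition of `ς : [-∞,∞] ≃ₜ [0,1]` with the inclusion `[0,1] ⊆ ℝ`. -/
def sigmaR (ς : EReal ≃ₜ Set.Icc (0 : ℝ) 1) : EReal → ℝ :=
  fun z => (ς z : ℝ)

/-- The map `s_{ab} : K(a;b) → ℝ` (defined on the ambient product), relative to a
function `σ : [-∞,∞] → ℝ`:
`s(x,y) = a − Σ_{i=b}^{a−1} σ((Σ_{b≤l≤i} x_l) − (Σ_{i<l≤a} y_l))`. -/
def sMap (a b : ℤ) (σ : EReal → ℝ) (k : KAmb a b) : ℝ :=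
  (a : ℝ) - ∑ i ∈ Finset.Ico b a,
    σ ((↑(∑ l ∈ Finset.Icc b i, Xext a b k l) : EReal)
        - (↑(∑ l ∈ Finset.Ioc i a, Yext a b k l) : EReal))

/-- The composition map `i_{mpn} : J(m,p) × J(p,n) → J(m,n)`: the coordinates are those
of `u` for `p < j < m`, equal to `∞` at `j = p`, and those of `v` for `n < j < p`. -/
def iComp (m p n : ℤ) (u : Jspace m p) (v : Jspace p n) : Jspace m n :=
  fun j =>
    if h : p < (j : ℤ) then u ⟨j.1, h, j.2.2⟩
    else if h' : (j : ℤ) < p then v ⟨j.1, j.2.1, h'⟩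
    else ∞

/-- The left composition map `κ^L : J(a,a') × K(a';b) → K(a;b)`. -/
def kappaL (a a' b : ℤ) (z : Jspace a a') (k : KAmb a' b) : KAmb a b :=
  (fun j =>
      if h : a' < (j : ℤ) then z ⟨j.1, h, j.2.2⟩
      else if h' : (j : ℤ) < a' then k.1 ⟨j.1, j.2.1, h'⟩
      else ∞,
    fun j => if h : (j : ℤ) ≤ a' then k.2 ⟨j.1, j.2.1, h⟩ else 0)

/-- The right composition map `κ^R : K(a;b') × J(b',b) → K(a;b)`. -/
def kappaR (a b' b : ℤ) (k : KAmb a b') (w : Jspace b' b) : KAmb a b :=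
  (fun j => if h : b' ≤ (j : ℤ) then k.1 ⟨j.1, h, j.2.2⟩ else 0,
    fun j =>
      if h : b' < (j : ℤ) then k.2 ⟨j.1, h, j.2.2⟩
      else if h' : (j : ℤ) < b' then w ⟨j.1, j.2.1, h'⟩
      else ∞)

end JKFlow

open JKFlow

namespace S2aux
open Finset

variable (a b : ℤ) (p : Jspace a b)

/-- `p` extended to all of `ℤ` by zero. -/
def pE (j : ℤ) : ℝ≥0∞ := if h : b < j ∧ j < a then p ⟨j, h⟩ else 0

/-- The general point of the fiber: cut at `r`, with `x_r = t`, `y_r = u`. -/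
def pt (r : ℤ) (t u : ℝ≥0∞) : KAmb a b :=
  (fun j => if (j : ℤ) < r then 0 else if (j : ℤ) = r then t else pE a b p j.1,
   fun j => if r < (j : ℤ) then 0 else if (j : ℤ) = r then u else pE a b p j.1)

/-- The fiber of `deltaMap` over `p`, inside `KSet`. -/
def Fib : Set (KAmb a b) := KSet a b ∩ {k | deltaMap a b k = p}

lemma pE_eq {j : ℤ} (h1 : b < j) (h2 : j < a) : pE a b p j = p ⟨j, h1, h2⟩ :=
  dif_pos ⟨h1, h2⟩

lemma pt_mem {r : ℤ} (hbr : b ≤ r) (hra : r ≤ a) {t u : ℝ≥0∞}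
    (h : b < r → r < a → t + u = pE a b p r) : pt a b p r t u ∈ Fib a b p := by
  refine ⟨⟨r, hbr, hra, fun j hj => ?_, fun j hj => ?_⟩, ?_⟩
  · exact if_pos hj
  · exact if_pos hj
  · show deltaMap a b (pt a b p r t u) = p
    funext j
    obtain ⟨j, hj1, hj2⟩ := j
    show (if (j : ℤ) < r then 0 else if (j : ℤ) = r then t else pE a b p j)
        + (if r < (j : ℤ) then 0 else if (j : ℤ) = r then u else pE a b p j) = _
    rcases lt_trichotomy j r with hc | hc | hc
    · rw [if_pos hc, if_neg (by omega), if_neg (by omega), zero_add, pE_eq a b p hj1 hj2]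
    · subst hc
      rw [if_neg (by omega), if_pos rfl, if_neg (by omega), if_pos rfl,
        h hj1 hj2, pE_eq a b p hj1 hj2]
    · rw [if_neg (by omega), if_neg (by omega), if_pos hc, add_zero, pE_eq a b p hj1 hj2]

/-- Every fiber element is of the form `pt r t u`. -/
lemma mem_fib (k : KAmb a b) (hk : k ∈ Fib a b p) :
    ∃ r t u, b ≤ r ∧ r ≤ a ∧ (b < r → r < a → t + u = pE a b p r) ∧
      k = pt a b p r t u := by
  obtain ⟨⟨r, hbr, hra, hx, hy⟩, hδ⟩ := hk
  have hδ' : ∀ j : {j : ℤ // b < j ∧ j < a},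
      k.1 ⟨j.1, j.2.1.le, j.2.2⟩ + k.2 ⟨j.1, j.2.1, j.2.2.le⟩ = p j :=
    fun j => congrFun hδ j
  refine ⟨r, Xext a b k r, Yext a b k r, hbr, hra, ?_, ?_⟩
  · intro h1 h2
    rw [Xext, dif_pos ⟨hbr, h2⟩, Yext, dif_pos ⟨h1, hra⟩]
    exact (hδ' ⟨r, h1, h2⟩).trans (pE_eq a b p h1 h2).symm
  · ext j
    · show k.1 j = if (j : ℤ) < r then 0 else if (j : ℤ) = r then Xext a b k r
        else pE a b p j.1
      rcases lt_trichotomy (j : ℤ) r with hc | hc | hc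
      · rw [if_pos hc]; exact hx j hc
      · rw [if_neg (by omega), if_pos hc, Xext, dif_pos (hc ▸ j.2)]
        exact congrArg k.1 (Subtype.ext hc)
      · rw [if_neg (by omega), if_neg (by omega)]
        have h1 : b < (j : ℤ) := lt_of_le_of_lt hbr hc
        have := hδ' ⟨j.1, h1, j.2.2⟩
        rw [hy ⟨j.1, h1, j.2.2.le⟩ hc, add_zero] at this
        rw [pE_eq a b p h1 j.2.2, ← this]
    · show k.2 j = if r < (j : ℤ) then 0 else if (j : ℤ) = r then Yext a b k r
        else pE a b p j.1
      rcases lt_trichotomy (j : ℤ) r with hc | hc | hc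
      · rw [if_neg (by omega), if_neg (by omega)]
        have h2 : (j : ℤ) < a := lt_of_lt_of_le hc hra
        have := hδ' ⟨j.1, j.2.1, h2⟩
        rw [hx ⟨j.1, j.2.1.le, h2⟩ hc, zero_add] at this
        rw [pE_eq a b p j.2.1 h2, ← this]
      · rw [if_neg (by omega), if_pos hc, Yext, dif_pos (hc ▸ j.2)]
        exact congrArg k.2 (Subtype.ext hc)
      · rw [if_pos hc]; exact hy j hc

end S2aux
namespace S2aux

variable (a b : ℤ) (p : Jspace a b)

/-- The partial sum `A_i = Σ_{b ≤ l ≤ i} x_l`. -/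
def AA (k : KAmb a b) (i : ℤ) : ℝ≥0∞ := ∑ l ∈ Finset.Icc b i, Xext a b k l

/-- The partial sum `B_i = Σ_{i < l ≤ a} y_l`. -/
def BB (k : KAmb a b) (i : ℤ) : ℝ≥0∞ := ∑ l ∈ Finset.Ioc i a, Yext a b k l

/-- The signed quantity `S_i = A_i - B_i` in `EReal`. -/
def SS (k : KAmb a b) (i : ℤ) : EReal := (AA a b k i : EReal) - (BB a b k i : EReal)

lemma sMap_eq (σ : EReal → ℝ) (k : KAmb a b) :
    sMap a b σ k = (a : ℝ) - ∑ i ∈ Finset.Ico b a, σ (SS a b k i) := rfl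

lemma Xext_pt (r : ℤ) (t u : ℝ≥0∞) (l : ℤ) (h : b ≤ l ∧ l < a) :
    Xext a b (pt a b p r t u) l =
      if l < r then 0 else if l = r then t else pE a b p l := by
  rw [Xext, dif_pos h]; rfl

lemma Yext_pt (r : ℤ) (t u : ℝ≥0∞) (l : ℤ) (h : b < l ∧ l ≤ a) :
    Yext a b (pt a b p r t u) l =
      if r < l then 0 else if l = r then u else pE a b p l := by
  rw [Yext, dif_pos h]; rfl

lemma AA_pt_lt {r : ℤ} (t u : ℝ≥0∞) {i : ℤ} (hi : i ∈ Finset.Ico b a)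
    (hir : i < r) : AA a b (pt a b p r t u) i = 0 := by
  simp only [Finset.mem_Ico] at hi
  apply Finset.sum_eq_zero
  intro l hl
  simp only [Finset.mem_Icc] at hl
  rw [Xext_pt a b p r t u l ⟨hl.1, by omega⟩, if_pos (by omega)]

lemma AA_pt_ge {r : ℤ} (hbr : b ≤ r) (t u : ℝ≥0∞) {i : ℤ} (hi : i ∈ Finset.Ico b a)
    (hir : r ≤ i) :
    AA a b (pt a b p r t u) i = t + ∑ l ∈ Finset.Ioc r i, pE a b p l := by
  simp only [Finset.mem_Ico] at hi
  have hsplit : Finset.Icc b i = Finset.Ico b r ∪ Finset.Icc r i := by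
    ext l; simp only [Finset.mem_Icc, Finset.mem_union, Finset.mem_Ico]; omega
  have hdisj : Disjoint (Finset.Ico b r) (Finset.Icc r i) :=
    Finset.disjoint_left.2 (by
      intro l hl hl'
      simp only [Finset.mem_Ico] at hl
      simp only [Finset.mem_Icc] at hl'
      omega)
  rw [AA, hsplit, Finset.sum_union hdisj]
  have h1 : ∑ l ∈ Finset.Ico b r, Xext a b (pt a b p r t u) l = 0 := by
    apply Finset.sum_eq_zero
    intro l hl
    simp only [Finset.mem_Ico] at hl
    rw [Xext_pt a b p r t u l ⟨hl.1, by omega⟩, if_pos (by omega)]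
  rw [h1, zero_add, Finset.Icc_eq_cons_Ioc hir, Finset.sum_cons]
  congr 1
  · rw [Xext_pt a b p r t u r ⟨hbr, by omega⟩, if_neg (by omega), if_pos rfl]
  · apply Finset.sum_congr rfl
    intro l hl
    simp only [Finset.mem_Ioc] at hl
    rw [Xext_pt a b p r t u l ⟨by omega, by omega⟩, if_neg (by omega), if_neg (by omega)]

lemma BB_pt_ge {r : ℤ} (t u : ℝ≥0∞) {i : ℤ} (hbi : b ≤ i) (hir : r ≤ i) :
    BB a b (pt a b p r t u) i = 0 := by
  apply Finset.sum_eq_zero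
  intro l hl
  simp only [Finset.mem_Ioc] at hl
  rw [Yext, dif_pos]
  · show (if r < l then 0 else if l = r then u else pE a b p l) = 0
    rw [if_pos (by omega)]
  · constructor
    · omega
    · exact hl.2

lemma BB_pt_lt {r : ℤ} (hra : r ≤ a) (t u : ℝ≥0∞) {i : ℤ} (hi : i ∈ Finset.Ico b a)
    (hir : i < r) :
    BB a b (pt a b p r t u) i = u + ∑ l ∈ Finset.Ioo i r, pE a b p l := by
  simp only [Finset.mem_Ico] at hi
  have hsplit : Finset.Ioc i a = Finset.Ioc i r ∪ Finset.Ioc r a := by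
    ext l; simp only [Finset.mem_Ioc, Finset.mem_union]; omega
  have hdisj : Disjoint (Finset.Ioc i r) (Finset.Ioc r a) :=
    Finset.disjoint_left.2 (by
      intro l hl hl'
      simp only [Finset.mem_Ioc] at hl hl'
      omega)
  rw [BB, hsplit, Finset.sum_union hdisj]
  have h1 : ∑ l ∈ Finset.Ioc r a, Yext a b (pt a b p r t u) l = 0 := by
    apply Finset.sum_eq_zero
    intro l hl
    simp only [Finset.mem_Ioc] at hl
    rw [Yext_pt a b p r t u l ⟨by omega, hl.2⟩, if_pos (by omega)]
  rw [h1, add_zero, Finset.Ioc_eq_cons_Ioo hir, Finset.sum_cons]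
  rw [add_comm (Yext a b (pt a b p r t u) r)]
  rw [add_comm u]
  congr 1
  · apply Finset.sum_congr rfl
    intro l hl
    simp only [Finset.mem_Ioo] at hl
    rw [Yext_pt a b p r t u l ⟨by omega, by omega⟩, if_neg (by omega), if_neg (by omega)]
  · rw [Yext_pt a b p r t u r ⟨by omega, by omega⟩, if_neg (by omega), if_pos rfl]

end S2aux
namespace S2aux

variable (a b : ℤ) (p : Jspace a b)

lemma tot {t u t' u' : ℝ≥0∞} (h : t + u = t' + u') :
    (t ≤ t' ∧ u' ≤ u) ∨ (t' ≤ t ∧ u ≤ u') := by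
  rcases le_total t t' with h1 | h1 <;> rcases le_total u u' with h2 | h2
  · rcases eq_or_lt_of_le h1 with rfl | h1'
    · exact Or.inr ⟨le_rfl, h2⟩
    rcases eq_or_lt_of_le h2 with rfl | h2'
    · exact Or.inl ⟨h1, le_rfl⟩
    exact absurd h (ne_of_lt (ENNReal.add_lt_add h1' h2'))
  · exact Or.inl ⟨h1, h2⟩
  · exact Or.inr ⟨h1, h2⟩
  · rcases eq_or_lt_of_le h1 with rfl | h1'
    · exact Or.inl ⟨le_rfl, h2⟩
    rcases eq_or_lt_of_le h2 with rfl | h2'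
    · exact Or.inr ⟨h1, le_rfl⟩
    exact absurd h.symm (ne_of_lt (ENNReal.add_lt_add h1' h2'))

lemma chainA {r r' : ℤ} (hbr : b ≤ r) (hra' : r' ≤ a) (hrr : r < r')
    {t u t' u' : ℝ≥0∞} (hc : b < r → r < a → t + u = pE a b p r)
    (hc' : b < r' → r' < a → t' + u' = pE a b p r') :
    ∀ i ∈ Finset.Ico b a,
      AA a b (pt a b p r' t' u') i ≤ AA a b (pt a b p r t u) i ∧
      BB a b (pt a b p r t u) i ≤ BB a b (pt a b p r' t' u') i := by
  intro i hi
  have hi' := Finset.mem_Ico.1 hi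
  constructor
  · by_cases h1 : i < r'
    · rw [AA_pt_lt a b p _ _ hi h1]; exact zero_le
    · push_neg at h1
      rw [AA_pt_ge a b p (by omega) t' u' hi h1, AA_pt_ge a b p hbr t u hi (by omega)]
      have hsplit : Finset.Ioc r i = Finset.Ioc r r' ∪ Finset.Ioc r' i := by
        ext l; simp only [Finset.mem_Ioc, Finset.mem_union]; omega
      have hdisj : Disjoint (Finset.Ioc r r') (Finset.Ioc r' i) :=
        Finset.disjoint_left.2 (by
          intro l hl hl'
          simp only [Finset.mem_Ioc] at hl hl'
          omega)
      rw [hsplit, Finset.sum_union hdisj]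
      have ht' : t' ≤ ∑ l ∈ Finset.Ioc r r', pE a b p l := by
        have h3 := hc' (by omega) (by omega)
        calc t' ≤ pE a b p r' := le_of_le_of_eq le_self_add h3
          _ ≤ _ := Finset.single_le_sum (f := fun l => pE a b p l)
              (fun _ _ => zero_le) (Finset.mem_Ioc.2 ⟨hrr, le_rfl⟩)
      calc t' + ∑ l ∈ Finset.Ioc r' i, pE a b p l
          ≤ (∑ l ∈ Finset.Ioc r r', pE a b p l) + ∑ l ∈ Finset.Ioc r' i, pE a b p l :=
            add_le_add ht' le_rfl
        _ ≤ _ := le_add_self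
  · by_cases h2 : r ≤ i
    · rw [BB_pt_ge a b p t u hi'.1 h2]; exact zero_le
    · push_neg at h2
      rw [BB_pt_lt a b p (by omega) t u hi h2, BB_pt_lt a b p hra' t' u' hi (by omega)]
      have hsplit : Finset.Ioo i r' = Finset.Ioo i r ∪ Finset.Ico r r' := by
        ext l; simp only [Finset.mem_Ioo, Finset.mem_union, Finset.mem_Ico]; omega
      have hdisj : Disjoint (Finset.Ioo i r) (Finset.Ico r r') :=
        Finset.disjoint_left.2 (by
          intro l hl hl'
          simp only [Finset.mem_Ioo] at hl
          simp only [Finset.mem_Ico] at hl'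
          omega)
      rw [hsplit, Finset.sum_union hdisj]
      have hu : u ≤ ∑ l ∈ Finset.Ico r r', pE a b p l := by
        have h3 := hc (by omega) (by omega)
        calc u ≤ pE a b p r := le_of_le_of_eq le_add_self h3
          _ ≤ _ := Finset.single_le_sum (f := fun l => pE a b p l)
              (fun _ _ => zero_le) (Finset.mem_Ico.2 ⟨le_rfl, hrr⟩)
      calc u + ∑ l ∈ Finset.Ioo i r, pE a b p l
          ≤ (∑ l ∈ Finset.Ico r r', pE a b p l) + ∑ l ∈ Finset.Ioo i r, pE a b p l :=
            add_le_add hu le_rfl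
        _ = ∑ l ∈ Finset.Ioo i r, pE a b p l + ∑ l ∈ Finset.Ico r r', pE a b p l :=
            add_comm _ _
        _ ≤ _ := le_add_self

lemma chainB {r : ℤ} (hbr : b ≤ r) (hra : r ≤ a) {t u t' u' : ℝ≥0∞} (hle : t ≤ t') (hge : u' ≤ u) :
    ∀ i ∈ Finset.Ico b a,
      AA a b (pt a b p r t u) i ≤ AA a b (pt a b p r t' u') i ∧
      BB a b (pt a b p r t' u') i ≤ BB a b (pt a b p r t u) i := by
  intro i hi
  have hi' := Finset.mem_Ico.1 hi
  constructor
  · by_cases h1 : i < r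
    · rw [AA_pt_lt a b p _ _ hi h1, AA_pt_lt a b p _ _ hi h1]
    · push_neg at h1
      rw [AA_pt_ge a b p hbr t u hi h1, AA_pt_ge a b p hbr t' u' hi h1]
      exact add_le_add hle le_rfl
  · by_cases h2 : r ≤ i
    · rw [BB_pt_ge a b p t u hi'.1 h2, BB_pt_ge a b p t' u' hi'.1 h2]
    · push_neg at h2
      rw [BB_pt_lt a b p hra t u hi h2, BB_pt_lt a b p hra t' u' hi h2]
      exact add_le_add hge le_rfl

lemma chain {k k' : KAmb a b} (hk : k ∈ Fib a b p) (hk' : k' ∈ Fib a b p) :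
    (∀ i ∈ Finset.Ico b a, AA a b k i ≤ AA a b k' i ∧ BB a b k' i ≤ BB a b k i) ∨
    (∀ i ∈ Finset.Ico b a, AA a b k' i ≤ AA a b k i ∧ BB a b k i ≤ BB a b k' i) := by
  obtain ⟨r, t, u, hbr, hra, hcon, rfl⟩ := mem_fib a b p k hk
  obtain ⟨r', t', u', hbr', hra', hcon', rfl⟩ := mem_fib a b p k' hk'
  rcases lt_trichotomy r r' with h | h | h
  · exact Or.inr (chainA a b p hbr hra' h hcon hcon')
  · subst h
    by_cases hdeg : b < r ∧ r < a
    · have h1 := (hcon hdeg.1 hdeg.2).trans (hcon' hdeg.1 hdeg.2).symm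
      rcases tot h1 with ⟨hl, hg⟩ | ⟨hl, hg⟩
      · exact Or.inl (chainB a b p hbr hra hl hg)
      · exact Or.inr (chainB a b p hbr hra hl hg)
    · have hcase : r = b ∨ r = a := by omega
      rcases hcase with hrb | hra2
      · rcases le_total t t' with hl | hl
        · refine Or.inl fun i hi => ?_
          have hi' := Finset.mem_Ico.1 hi
          refine ⟨?_, ?_⟩
          · rw [AA_pt_ge a b p hbr t u hi (by omega), AA_pt_ge a b p hbr t' u' hi (by omega)]
            exact add_le_add hl le_rfl
          · rw [BB_pt_ge a b p t u hi'.1 (by omega), BB_pt_ge a b p t' u' hi'.1 (by omega)]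
        · refine Or.inr fun i hi => ?_
          have hi' := Finset.mem_Ico.1 hi
          refine ⟨?_, ?_⟩
          · rw [AA_pt_ge a b p hbr t u hi (by omega), AA_pt_ge a b p hbr t' u' hi (by omega)]
            exact add_le_add hl le_rfl
          · rw [BB_pt_ge a b p t u hi'.1 (by omega), BB_pt_ge a b p t' u' hi'.1 (by omega)]
      · rcases le_total u u' with hl | hl
        · refine Or.inr fun i hi => ?_
          have hi' := Finset.mem_Ico.1 hi
          refine ⟨?_, ?_⟩
          · rw [AA_pt_lt a b p _ _ hi (by omega), AA_pt_lt a b p _ _ hi (by omega)]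
          · rw [BB_pt_lt a b p hra t u hi (by omega), BB_pt_lt a b p hra t' u' hi (by omega)]
            exact add_le_add hl le_rfl
        · refine Or.inl fun i hi => ?_
          have hi' := Finset.mem_Ico.1 hi
          refine ⟨?_, ?_⟩
          · rw [AA_pt_lt a b p _ _ hi (by omega), AA_pt_lt a b p _ _ hi (by omega)]
          · rw [BB_pt_lt a b p hra t u hi (by omega), BB_pt_lt a b p hra t' u' hi (by omega)]
            exact add_le_add hl le_rfl
  · exact Or.inl (chainA a b p hbr' hra h hcon' hcon)

end S2aux
namespace S2aux

variable (a b : ℤ) (p : Jspace a b)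

lemma disjAB {k : KAmb a b} (hk : k ∈ Fib a b p) {i : ℤ} (hi : i ∈ Finset.Ico b a) :
    AA a b k i = 0 ∨ BB a b k i = 0 := by
  obtain ⟨r, t, u, hbr, hra, hcon, rfl⟩ := mem_fib a b p k hk
  by_cases h : i < r
  · exact Or.inl (AA_pt_lt a b p t u hi h)
  · exact Or.inr (BB_pt_ge a b p t u (Finset.mem_Ico.1 hi).1 (by omega))

lemma ereal_sub_inj {A B A' B' : ℝ≥0∞} (h0 : A = 0 ∨ B = 0) (h0' : A' = 0 ∨ B' = 0)
    (h : (A : EReal) - (B : EReal) = (A' : EReal) - (B' : EReal)) :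
    A = A' ∧ B = B' := by
  have key : ∀ C : ℝ≥0∞, (C : EReal) = 0 → C = 0 := fun C hC =>
    EReal.coe_ennreal_eq_zero.1 hC
  rcases h0 with rfl | rfl <;> rcases h0' with rfl | rfl
  · simp only [EReal.coe_ennreal_zero, sub_eq_add_neg, zero_add] at h
    exact ⟨rfl, EReal.coe_ennreal_eq_coe_ennreal_iff.1 (neg_injective h)⟩
  · simp only [EReal.coe_ennreal_zero, sub_eq_add_neg, zero_add, neg_zero, add_zero] at h
    have h1 : (A' : EReal) ≤ 0 := by
      rw [← h]
      rw [show (0 : EReal) = -0 by simp]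
      exact EReal.neg_le_neg_iff.2 (EReal.coe_ennreal_nonneg B)
    have hA' : A' = 0 := key _ (le_antisymm h1 (EReal.coe_ennreal_nonneg A'))
    have hB : B = 0 := by
      have : -(B : EReal) = 0 := by rw [h, hA', EReal.coe_ennreal_zero]
      exact key _ (EReal.neg_eq_zero_iff.1 this)
    exact ⟨hA'.symm, hB⟩
  · simp only [EReal.coe_ennreal_zero, sub_eq_add_neg, zero_add, neg_zero, add_zero] at h
    have h1 : (A : EReal) ≤ 0 := by
      rw [h]
      rw [show (0 : EReal) = -0 by simp]
      exact EReal.neg_le_neg_iff.2 (EReal.coe_ennreal_nonneg B')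
    have hA : A = 0 := key _ (le_antisymm h1 (EReal.coe_ennreal_nonneg A))
    have hB' : B' = 0 := by
      have : -(B' : EReal) = 0 := by rw [← h, hA, EReal.coe_ennreal_zero]
      exact key _ (EReal.neg_eq_zero_iff.1 this)
    exact ⟨hA, hB'.symm⟩
  · simp only [EReal.coe_ennreal_zero, sub_eq_add_neg, neg_zero, add_zero] at h
    exact ⟨EReal.coe_ennreal_eq_coe_ennreal_iff.1 h, rfl⟩

lemma Ioo_pred_self (r : ℤ) : Finset.Ioo (r - 1) r = ∅ := by
  ext l; simp only [Finset.mem_Ioo, Finset.notMem_empty, iff_false]; omega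

lemma pt_eq_of_tu {r : ℤ} {t u t' u' : ℝ≥0∞}
    (ht : r < a → t = t') (hu : b < r → u = u') :
    pt a b p r t u = pt a b p r t' u' := by
  ext j
  · show (if (j : ℤ) < r then 0 else if (j : ℤ) = r then t else pE a b p j.1)
      = (if (j : ℤ) < r then 0 else if (j : ℤ) = r then t' else pE a b p j.1)
    by_cases h1 : (j : ℤ) < r
    · rw [if_pos h1, if_pos h1]
    · by_cases h2 : (j : ℤ) = r
      · rw [if_neg h1, if_neg h1, if_pos h2, if_pos h2, ht (h2 ▸ j.2.2)]
      · rw [if_neg h1, if_neg h1, if_neg h2, if_neg h2]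
  · show (if r < (j : ℤ) then 0 else if (j : ℤ) = r then u else pE a b p j.1)
      = (if r < (j : ℤ) then 0 else if (j : ℤ) = r then u' else pE a b p j.1)
    by_cases h1 : r < (j : ℤ)
    · rw [if_pos h1, if_pos h1]
    · by_cases h2 : (j : ℤ) = r
      · rw [if_neg h1, if_neg h1, if_pos h2, if_pos h2, hu (h2 ▸ j.2.1)]
      · rw [if_neg h1, if_neg h1, if_neg h2, if_neg h2]

lemma eq_AB_lt {r r' : ℤ} (hbr : b ≤ r) (hra : r ≤ a) (hbr' : b ≤ r') (hra' : r' ≤ a)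
    (hrr' : r < r') {t u t' u' : ℝ≥0∞}
    (hAB : ∀ i ∈ Finset.Ico b a,
      AA a b (pt a b p r t u) i = AA a b (pt a b p r' t' u') i ∧
      BB a b (pt a b p r t u) i = BB a b (pt a b p r' t' u') i) :
    pt a b p r t u = pt a b p r' t' u' := by
  have hra2 : r < a := by omega
  have hbr2 : b < r' := by omega
  have him0 : r ∈ Finset.Ico b a := Finset.mem_Ico.2 ⟨hbr, hra2⟩
  have F1 : t = 0 := by
    have h := (hAB r him0).1
    rw [AA_pt_ge a b p hbr t u him0 le_rfl, AA_pt_lt a b p t' u' him0 hrr',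
      Finset.Ioc_self, Finset.sum_empty, add_zero] at h
    exact h
  have F2 : u' = 0 := by
    have him : r' - 1 ∈ Finset.Ico b a := Finset.mem_Ico.2 ⟨by omega, by omega⟩
    have h := (hAB _ him).2
    rw [BB_pt_ge a b p t u (by omega) (by omega),
      BB_pt_lt a b p hra' t' u' him (by omega), Ioo_pred_self, Finset.sum_empty,
      add_zero] at h
    exact h.symm
  have F3 : ∀ l, r < l → l < r' → pE a b p l = 0 := by
    intro l hl1 hl2
    have him : l ∈ Finset.Ico b a := Finset.mem_Ico.2 ⟨by omega, by omega⟩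
    have h := (hAB l him).1
    rw [AA_pt_ge a b p hbr t u him hl1.le, AA_pt_lt a b p t' u' him hl2, F1,
      zero_add] at h
    exact (Finset.sum_eq_zero_iff.1 h) l (Finset.mem_Ioc.2 ⟨hl1, le_rfl⟩)
  have hIoo : ∑ l ∈ Finset.Ioo r r', pE a b p l = 0 :=
    Finset.sum_eq_zero fun l hl => by
      have := Finset.mem_Ioo.1 hl; exact F3 l this.1 this.2
  have F4 : r' < a → t' = pE a b p r' := by
    intro h4
    have him : r' ∈ Finset.Ico b a := Finset.mem_Ico.2 ⟨by omega, h4⟩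
    have h := (hAB r' him).1
    rw [AA_pt_ge a b p hbr t u him (by omega), AA_pt_ge a b p hbr' t' u' him le_rfl,
      Finset.Ioc_self, Finset.sum_empty, add_zero, F1, zero_add,
      Finset.Ioc_eq_cons_Ioo hrr', Finset.sum_cons, hIoo, add_zero] at h
    exact h.symm
  have F5 : b < r → u = pE a b p r := by
    intro h5
    have him : r - 1 ∈ Finset.Ico b a := Finset.mem_Ico.2 ⟨by omega, by omega⟩
    have h := (hAB _ him).2
    have hins : Finset.Ioo (r - 1) r' = insert r (Finset.Ioo r r') := by
      ext l; simp only [Finset.mem_Ioo, Finset.mem_insert]; omega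
    rw [BB_pt_lt a b p hra t u him (by omega), BB_pt_lt a b p hra' t' u' him (by omega),
      F2, zero_add, Ioo_pred_self, Finset.sum_empty, add_zero, hins,
      Finset.sum_insert (by simp), hIoo, add_zero] at h
    exact h
  ext j
  · show (if (j : ℤ) < r then 0 else if (j : ℤ) = r then t else pE a b p j.1)
      = (if (j : ℤ) < r' then 0 else if (j : ℤ) = r' then t' else pE a b p j.1)
    by_cases hj1 : (j : ℤ) < r
    · rw [if_pos hj1, if_pos (by omega)]
    · by_cases hj2 : (j : ℤ) = r
      · rw [if_neg hj1, if_pos hj2, if_pos (by omega), F1]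
      · by_cases hj3 : (j : ℤ) < r'
        · rw [if_neg hj1, if_neg hj2, if_pos hj3, F3 j.1 (by omega) hj3]
        · by_cases hj4 : (j : ℤ) = r'
          · rw [if_neg hj1, if_neg hj2, if_neg hj3, if_pos hj4,
              F4 (hj4 ▸ j.2.2), hj4]
          · rw [if_neg hj1, if_neg hj2, if_neg hj3, if_neg hj4]
  · show (if r < (j : ℤ) then 0 else if (j : ℤ) = r then u else pE a b p j.1)
      = (if r' < (j : ℤ) then 0 else if (j : ℤ) = r' then u' else pE a b p j.1)
    by_cases hj1 : (j : ℤ) < r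
    · rw [if_neg (by omega), if_neg (by omega), if_neg (by omega), if_neg (by omega)]
    · by_cases hj2 : (j : ℤ) = r
      · rw [if_neg (by omega), if_pos hj2, if_neg (by omega), if_neg (by omega),
          F5 (hj2 ▸ j.2.1), hj2]
      · by_cases hj3 : (j : ℤ) < r'
        · rw [if_pos (by omega), if_neg (by omega), if_neg (by omega),
            F3 j.1 (by omega) hj3]
        · by_cases hj4 : (j : ℤ) = r'
          · rw [if_pos (by omega), if_neg (by omega), if_pos hj4, F2]
          · rw [if_pos (by omega), if_pos (by omega)]

lemma eq_of_SS {k k' : KAmb a b} (hk : k ∈ Fib a b p) (hk' : k' ∈ Fib a b p)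
    (hS : ∀ i ∈ Finset.Ico b a, SS a b k i = SS a b k' i) : k = k' := by
  have hAB : ∀ i ∈ Finset.Ico b a, AA a b k i = AA a b k' i ∧ BB a b k i = BB a b k' i :=
    fun i hi => ereal_sub_inj (disjAB a b p hk hi) (disjAB a b p hk' hi) (hS i hi)
  obtain ⟨r, t, u, hbr, hra, hcon, rfl⟩ := mem_fib a b p k hk
  obtain ⟨r', t', u', hbr', hra', hcon', rfl⟩ := mem_fib a b p k' hk'
  rcases lt_trichotomy r r' with h | h | h
  · exact eq_AB_lt a b p hbr hra hbr' hra' h hAB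
  · subst h
    refine pt_eq_of_tu a b p ?_ ?_
    · intro h4
      have him : r ∈ Finset.Ico b a := Finset.mem_Ico.2 ⟨hbr, h4⟩
      have h := (hAB r him).1
      rwa [AA_pt_ge a b p hbr t u him le_rfl, AA_pt_ge a b p hbr t' u' him le_rfl,
        Finset.Ioc_self, Finset.sum_empty, add_zero, add_zero] at h
    · intro h5
      have him : r - 1 ∈ Finset.Ico b a := Finset.mem_Ico.2 ⟨by omega, by omega⟩
      have h := (hAB _ him).2
      rwa [BB_pt_lt a b p hra t u him (by omega), BB_pt_lt a b p hra t' u' him (by omega),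
        Ioo_pred_self, Finset.sum_empty, add_zero, add_zero] at h
  · exact (eq_AB_lt a b p hbr' hra' hbr hra h fun i hi =>
      ⟨((hAB i hi).1).symm, ((hAB i hi).2).symm⟩).symm

end S2aux
namespace S2aux

variable (a b : ℤ) (p : Jspace a b) (ς : EReal ≃ₜ Set.Icc (0 : ℝ) 1)

lemma sigma_mem (z : EReal) : sigmaR ς z ∈ Set.Icc (0 : ℝ) 1 := (ς z).2

lemma sigma_inj : Function.Injective (sigmaR ς) := fun z w h =>
  ς.injective (Subtype.ext h)

lemma sigma_bot (hς : Monotone (sigmaR ς)) : sigmaR ς ⊥ = 0 := by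
  obtain ⟨z, hz⟩ := ς.surjective ⟨0, by norm_num⟩
  refine le_antisymm ?_ (sigma_mem ς ⊥).1
  have h1 : sigmaR ς ⊥ ≤ sigmaR ς z := hς bot_le
  rwa [show sigmaR ς z = 0 by rw [sigmaR, hz]] at h1

lemma sigma_top (hς : Monotone (sigmaR ς)) : sigmaR ς ⊤ = 1 := by
  obtain ⟨z, hz⟩ := ς.surjective ⟨1, by norm_num⟩
  refine le_antisymm (sigma_mem ς ⊤).2 ?_
  have h1 : sigmaR ς z ≤ sigmaR ς ⊤ := hς le_top
  rwa [show sigmaR ς z = 1 by rw [sigmaR, hz]] at h1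

lemma SS_le {k k' : KAmb a b} {i : ℤ} (hA : AA a b k i ≤ AA a b k' i)
    (hB : BB a b k' i ≤ BB a b k i) : SS a b k i ≤ SS a b k' i :=
  EReal.sub_le_sub (EReal.coe_ennreal_le_coe_ennreal_iff.2 hA)
    (EReal.coe_ennreal_le_coe_ennreal_iff.2 hB)

lemma card_Ico_real (hab : b ≤ a) : ((Finset.Ico b a).card : ℝ) = (a : ℝ) - b := by
  rw [Int.card_Ico]
  have h := Int.toNat_of_nonneg (show (0:ℤ) ≤ a - b by omega)
  have : (((a - b).toNat : ℤ) : ℝ) = ((a - b : ℤ) : ℝ) := by rw [h]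
  push_cast at this ⊢
  linarith

lemma mapsTo (hab : b ≤ a) : Set.MapsTo (sMap a b (sigmaR ς)) (Fib a b p)
    (Set.Icc (b : ℝ) (a : ℝ)) := by
  intro k _
  rw [sMap_eq]
  have h1 : (0 : ℝ) ≤ ∑ i ∈ Finset.Ico b a, sigmaR ς (SS a b k i) :=
    Finset.sum_nonneg fun i _ => (sigma_mem ς _).1
  have h2 : ∑ i ∈ Finset.Ico b a, sigmaR ς (SS a b k i) ≤ (Finset.Ico b a).card • (1 : ℝ) :=
    Finset.sum_le_card_nsmul _ _ _ fun i _ => (sigma_mem ς _).2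
  rw [nsmul_eq_mul, mul_one, card_Ico_real a b hab] at h2
  constructor <;> [linarith; linarith]

lemma injOn (hς : Monotone (sigmaR ς)) :
    Set.InjOn (sMap a b (sigmaR ς)) (Fib a b p) := by
  intro k hk k' hk' heq
  rw [sMap_eq, sMap_eq] at heq
  have hsum : ∑ i ∈ Finset.Ico b a, sigmaR ς (SS a b k i)
      = ∑ i ∈ Finset.Ico b a, sigmaR ς (SS a b k' i) := by linarith
  rcases chain a b p hk hk' with H | H
  · refine eq_of_SS a b p hk hk' fun i hi => ?_
    have hle : ∀ i ∈ Finset.Ico b a, sigmaR ς (SS a b k i) ≤ sigmaR ς (SS a b k' i) :=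
      fun i hi => hς (SS_le a b ((H i hi).1) ((H i hi).2))
    exact sigma_inj ς ((Finset.sum_eq_sum_iff_of_le hle).1 hsum i hi)
  · refine (eq_of_SS a b p hk' hk fun i hi => ?_).symm
    have hle : ∀ i ∈ Finset.Ico b a, sigmaR ς (SS a b k' i) ≤ sigmaR ς (SS a b k i) :=
      fun i hi => hς (SS_le a b ((H i hi).1) ((H i hi).2))
    exact sigma_inj ς ((Finset.sum_eq_sum_iff_of_le hle).1 hsum.symm i hi)

end S2aux
namespace S2aux

variable (a b : ℤ) (p : Jspace a b) (ς : EReal ≃ₜ Set.Icc (0 : ℝ) 1)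

lemma cont_AA (i : ℤ) : Continuous (fun k : KAmb a b => AA a b k i) := by
  apply continuous_finset_sum
  intro l _
  unfold Xext
  by_cases h : b ≤ l ∧ l < a
  · simp only [dif_pos h]
    exact (continuous_apply _).comp continuous_fst
  · simp only [dif_neg h]
    exact continuous_const

lemma cont_BB (i : ℤ) : Continuous (fun k : KAmb a b => BB a b k i) := by
  apply continuous_finset_sum
  intro l _
  unfold Yext
  by_cases h : b < l ∧ l ≤ a
  · simp only [dif_pos h]
    exact (continuous_apply _).comp continuous_snd
  · simp only [dif_neg h]
    exact continuous_const

lemma cont_sigma : Continuous (sigmaR ς) :=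
  continuous_subtype_val.comp ς.continuous

lemma contOn_SS {i : ℤ} (hi : i ∈ Finset.Ico b a) :
    ContinuousOn (fun k : KAmb a b => SS a b k i) (Fib a b p) := by
  intro k hk
  apply ContinuousAt.continuousWithinAt
  have hA : Continuous fun k : KAmb a b => ((AA a b k i : EReal)) :=
    EReal.continuous_coe_ennreal_iff.mpr (cont_AA a b i)
  have hB : Continuous fun k : KAmb a b => (-(BB a b k i : EReal)) :=
    continuous_neg.comp (EReal.continuous_coe_ennreal_iff.mpr (cont_BB a b i))
  have hadd : ContinuousAt (fun q : EReal × EReal => q.1 + q.2)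
      ((AA a b k i : EReal), -(BB a b k i : EReal)) := by
    apply EReal.continuousAt_add
    · rcases disjAB a b p hk hi with h | h
      · left; rw [h]; simp
      · right; rw [h]; simp
    · left; exact EReal.coe_ennreal_ne_bot _
  have : ContinuousAt (fun k : KAmb a b =>
      (AA a b k i : EReal) + -(BB a b k i : EReal)) k :=
    ContinuousAt.comp (g := fun q : EReal × EReal => q.1 + q.2)
      (f := fun x : KAmb a b => ((AA a b x i : EReal), -(BB a b x i : EReal)))
      (x := k) hadd ((hA.prodMk hB).continuousAt)
  have hrw : (fun k : KAmb a b => SS a b k i)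
      = fun k : KAmb a b => (AA a b k i : EReal) + -(BB a b k i : EReal) := by
    funext k; rw [SS, sub_eq_add_neg]
  rw [hrw]
  exact this

lemma contOn_sum {X : Type*} [TopologicalSpace X] {F : Set X} (s : Finset ℤ)
    (f : ℤ → X → ℝ) (hf : ∀ i ∈ s, ContinuousOn (f i) F) :
    ContinuousOn (fun k => ∑ i ∈ s, f i k) F := by
  classical
  induction s using Finset.induction_on with
  | empty => simpa using continuousOn_const
  | @insert j s hj ih =>
    have h1 : ContinuousOn (fun k => f j k + ∑ i ∈ s, f i k) F :=
      (hf j (Finset.mem_insert_self j s)).add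
        (ih fun i hi => hf i (Finset.mem_insert_of_mem hi))
    refine h1.congr fun k _ => ?_
    rw [Finset.sum_insert hj]

lemma contOn_s : ContinuousOn (sMap a b (sigmaR ς)) (Fib a b p) := by
  have : ContinuousOn (fun k : KAmb a b =>
      (a : ℝ) - ∑ i ∈ Finset.Ico b a, sigmaR ς (SS a b k i)) (Fib a b p) := by
    apply ContinuousOn.sub continuousOn_const
    apply contOn_sum
    intro i hi
    exact (cont_sigma ς).comp_continuousOn (contOn_SS a b p hi)
  exact this

lemma isClosed_fib : IsClosed (Fib a b p) := by
  apply IsClosed.inter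
  · have hset : KSet a b = ⋃ r ∈ Finset.Icc b a,
        ({k : KAmb a b | ∀ j : {j : ℤ // b ≤ j ∧ j < a}, (j : ℤ) < r → k.1 j = 0}
          ∩ {k : KAmb a b | ∀ j : {j : ℤ // b < j ∧ j ≤ a}, r < (j : ℤ) → k.2 j = 0}) := by
      ext k
      simp only [KSet, Set.mem_setOf_eq, Set.mem_iUnion, Set.mem_inter_iff,
        Finset.mem_Icc, exists_prop]
      constructor
      · rintro ⟨r, h1, h2, h3, h4⟩; exact ⟨r, ⟨h1, h2⟩, h3, h4⟩
      · rintro ⟨r, ⟨h1, h2⟩, h3, h4⟩; exact ⟨r, h1, h2, h3, h4⟩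
    rw [hset]
    apply Set.Finite.isClosed_biUnion (Finset.finite_toSet _)
    intro r _
    apply IsClosed.inter
    · have : {k : KAmb a b | ∀ j : {j : ℤ // b ≤ j ∧ j < a}, (j : ℤ) < r → k.1 j = 0}
          = ⋂ (j : {j : ℤ // b ≤ j ∧ j < a}) (_ : (j : ℤ) < r), {k : KAmb a b | k.1 j = 0} := by
        ext k; simp only [Set.mem_setOf_eq, Set.mem_iInter]
      rw [this]
      refine isClosed_iInter fun j => isClosed_iInter fun _ => ?_
      exact isClosed_singleton.preimage ((continuous_apply _).comp continuous_fst)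
    · have : {k : KAmb a b | ∀ j : {j : ℤ // b < j ∧ j ≤ a}, r < (j : ℤ) → k.2 j = 0}
          = ⋂ (j : {j : ℤ // b < j ∧ j ≤ a}) (_ : r < (j : ℤ)), {k : KAmb a b | k.2 j = 0} := by
        ext k; simp only [Set.mem_setOf_eq, Set.mem_iInter]
      rw [this]
      refine isClosed_iInter fun j => isClosed_iInter fun _ => ?_
      exact isClosed_singleton.preimage ((continuous_apply _).comp continuous_snd)
  · have : {k : KAmb a b | deltaMap a b k = p} = (deltaMap a b) ⁻¹' {p} := rfl
    rw [this]
    refine (isClosed_singleton).preimage ?_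
    exact continuous_pi fun j =>
      ((continuous_apply _).comp continuous_fst).add ((continuous_apply _).comp continuous_snd)

lemma isCompact_fib : IsCompact (Fib a b p) := (isClosed_fib a b p).isCompact

end S2aux
namespace S2aux

variable (a b : ℤ) (p : Jspace a b)

instance : ConnectedSpace ℝ≥0∞ := by
  have h2 : Set.Icc (0 : ℝ≥0∞) ⊤ = Set.univ := by
    ext x; simp
  have : IsPreconnected (Set.univ : Set ℝ≥0∞) := by
    have := isPreconnected_Icc (a := (0 : ℝ≥0∞)) (b := ⊤)
    rwa [h2] at this
  exact { isPreconnected_univ := this, toNonempty := inferInstance }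

/-- First path through sector `r`. -/
def ptA (r : ℤ) (t : ℝ≥0∞) : KAmb a b :=
  if r = b then pt a b p b t 0
  else if pE a b p r = ⊤ then pt a b p r t ⊤
  else pt a b p r (min t (pE a b p r)) (pE a b p r - t)

/-- Second path through sector `r`. -/
def ptB (r : ℤ) (u : ℝ≥0∞) : KAmb a b :=
  if r = a then pt a b p a 0 u
  else if pE a b p r = ⊤ then pt a b p r ⊤ u
  else ptA a b p r 0

/-- The sector at cut `r`. -/
def Sec (r : ℤ) : Set (KAmb a b) :=
  Set.range (ptA a b p r) ∪ Set.range (ptB a b p r)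

lemma kamb_degen (hab : a = b) (k k' : KAmb a b) : k = k' := by
  ext j
  · exact absurd j.2 (by omega)
  · exact absurd j.2 (by omega)

lemma cont_pt (r : ℤ) {f g : ℝ≥0∞ → ℝ≥0∞} (hf : Continuous f) (hg : Continuous g) :
    Continuous (fun t => pt a b p r (f t) (g t)) := by
  apply Continuous.prodMk
  · apply continuous_pi
    intro j
    show Continuous fun t =>
      (if (j : ℤ) < r then 0 else if (j : ℤ) = r then f t else pE a b p j.1)
    by_cases h1 : (j : ℤ) < r
    · simp only [if_pos h1]; exact continuous_const
    · by_cases h2 : (j : ℤ) = r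
      · simp only [if_neg h1, if_pos h2]; exact hf
      · simp only [if_neg h1, if_neg h2]; exact continuous_const
  · apply continuous_pi
    intro j
    show Continuous fun t =>
      (if r < (j : ℤ) then 0 else if (j : ℤ) = r then g t else pE a b p j.1)
    by_cases h1 : r < (j : ℤ)
    · simp only [if_pos h1]; exact continuous_const
    · by_cases h2 : (j : ℤ) = r
      · simp only [if_neg h1, if_pos h2]; exact hg
      · simp only [if_neg h1, if_neg h2]; exact continuous_const

lemma cont_ptA (r : ℤ) : Continuous (ptA a b p r) := by
  unfold ptA
  split_ifs with h1 h2
  · exact cont_pt a b p b continuous_id continuous_const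
  · exact cont_pt a b p r continuous_id continuous_const
  · exact cont_pt a b p r (continuous_id.min continuous_const)
      (ENNReal.continuous_sub_left h2)

lemma cont_ptB (r : ℤ) : Continuous (ptB a b p r) := by
  unfold ptB
  split_ifs with h1 h2
  · exact cont_pt a b p a continuous_const continuous_id
  · exact cont_pt a b p r continuous_const continuous_id
  · exact continuous_const

lemma pE_b : pE a b p b = 0 := dif_neg (by omega)

lemma pE_a : pE a b p a = 0 := dif_neg (by omega)

lemma ptA_mem {r : ℤ} (hbr : b ≤ r) (hra : r ≤ a) (t : ℝ≥0∞) :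
    ptA a b p r t ∈ Fib a b p := by
  unfold ptA
  split_ifs with h1 h2
  · exact pt_mem a b p le_rfl (by omega) (fun h => (lt_irrefl b h).elim)
  · refine pt_mem a b p hbr hra fun _ _ => ?_
    rw [h2]; simp
  · refine pt_mem a b p hbr hra fun _ _ => ?_
    rcases le_total t (pE a b p r) with h | h
    · rw [min_eq_left h, add_tsub_cancel_of_le h]
    · rw [min_eq_right h, tsub_eq_zero_of_le h, add_zero]

lemma ptB_mem {r : ℤ} (hbr : b ≤ r) (hra : r ≤ a) (u : ℝ≥0∞) :
    ptB a b p r u ∈ Fib a b p := by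
  unfold ptB
  split_ifs with h1 h2
  · exact pt_mem a b p (by omega) le_rfl (fun _ h => (lt_irrefl a h).elim)
  · refine pt_mem a b p hbr hra fun _ _ => ?_
    rw [h2]; simp
  · exact ptA_mem a b p hbr hra 0

lemma sec_subset {r : ℤ} (hbr : b ≤ r) (hra : r ≤ a) : Sec a b p r ⊆ Fib a b p := by
  rintro k (⟨t, rfl⟩ | ⟨u, rfl⟩)
  · exact ptA_mem a b p hbr hra t
  · exact ptB_mem a b p hbr hra u

lemma sec_preconnected {r : ℤ} (hbr : b ≤ r) (hra : r ≤ a) :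
    IsPreconnected (Sec a b p r) := by
  have hA : IsPreconnected (Set.range (ptA a b p r)) :=
    isPreconnected_range (cont_ptA a b p r)
  have hB : IsPreconnected (Set.range (ptB a b p r)) :=
    isPreconnected_range (cont_ptB a b p r)
  by_cases hab : a = b
  · -- degenerate: any point works
    refine IsPreconnected.union (ptA a b p r 0) ⟨0, rfl⟩ ⟨0, kamb_degen a b hab _ _⟩ hA hB
  · by_cases h1 : r = a
    · -- ptA r t = pt a 0 0 = ptB a 0
      refine IsPreconnected.union (ptB a b p r 0) ⟨0, ?_⟩ ⟨0, rfl⟩ hA hB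
      unfold ptA ptB
      rw [if_pos h1, if_neg (by omega), if_neg (by rw [h1, pE_a]; exact ENNReal.zero_ne_top),
        h1, pE_a, min_self, tsub_zero]
    · by_cases h2 : pE a b p r = ⊤
      · by_cases h3 : r = b
        · -- pE b = 0 contradiction with ⊤
          rw [h3, pE_b] at h2
          exact absurd h2 ENNReal.zero_ne_top
        · refine IsPreconnected.union (ptA a b p r ⊤) ⟨⊤, rfl⟩ ⟨⊤, ?_⟩ hA hB
          unfold ptA ptB
          rw [if_neg h3, if_pos h2, if_neg h1, if_pos h2]
      · refine IsPreconnected.union (ptA a b p r 0) ⟨0, rfl⟩ ⟨0, ?_⟩ hA hB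
        unfold ptB
        by_cases h3 : r = b
        · rw [if_neg h1, if_neg h2]
        · rw [if_neg h1, if_neg h2]

lemma fib_sub_union :
    Fib a b p ⊆ ⋃ r ∈ Set.Icc b a, Sec a b p r := by
  intro k hk
  obtain ⟨r, t, u, hbr, hra, hcon, rfl⟩ := mem_fib a b p k hk
  simp only [Set.mem_iUnion, Set.mem_Icc, exists_prop]
  refine ⟨r, ⟨hbr, hra⟩, ?_⟩
  by_cases h1 : r = b
  · left
    refine ⟨t, ?_⟩
    unfold ptA
    rw [if_pos h1]
    rw [show pt a b p b t 0 = pt a b p r t 0 by rw [h1]]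
    exact (pt_eq_of_tu a b p (fun _ => rfl) (fun h => absurd h (by omega))).symm
  · by_cases h2 : r = a
    · right
      refine ⟨u, ?_⟩
      unfold ptB
      rw [if_pos h2]
      rw [show pt a b p a 0 u = pt a b p r 0 u by rw [h2]]
      exact (pt_eq_of_tu a b p (fun h => absurd h (by omega)) (fun _ => rfl)).symm
    · have hcon' : t + u = pE a b p r := hcon (by omega) (by omega)
      by_cases h3 : pE a b p r = ⊤
      · by_cases ht : t = ⊤
        · right
          refine ⟨u, ?_⟩
          unfold ptB
          rw [if_neg h2, if_pos h3, ht]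
        · left
          have hu : u = ⊤ := by
            rw [h3] at hcon'
            rcases ENNReal.add_eq_top.1 hcon' with h | h
            · exact absurd h ht
            · exact h
          refine ⟨t, ?_⟩
          unfold ptA
          rw [if_neg h1, if_pos h3, hu]
      · left
        refine ⟨t, ?_⟩
        unfold ptA
        rw [if_neg h1, if_neg h3]
        have ht : t ≤ pE a b p r := le_of_le_of_eq le_self_add hcon'
        have hu : u = pE a b p r - t := by
          rw [← hcon', ENNReal.add_sub_cancel_left]
          intro htop
          rw [htop, top_add] at hcon'
          exact h3 hcon'.symm
        rw [min_eq_left ht, ← hu]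

lemma fib_eq_union (hab : b ≤ a) :
    Fib a b p = ⋃ r ∈ Set.Icc b a, Sec a b p r := by
  refine le_antisymm (fib_sub_union a b p) ?_
  intro k hk
  simp only [Set.mem_iUnion, Set.mem_Icc, exists_prop] at hk
  obtain ⟨r, ⟨h1, h2⟩, hk⟩ := hk
  exact sec_subset a b p h1 h2 hk

lemma corner_eq (r : ℤ) :
    pt a b p r 0 (pE a b p r) = pt a b p (r + 1) (pE a b p (r + 1)) 0 := by
  ext j
  · show (if (j : ℤ) < r then 0 else if (j : ℤ) = r then 0 else pE a b p j.1)
      = (if (j : ℤ) < r + 1 then 0 else if (j : ℤ) = r + 1 then pE a b p (r + 1)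
          else pE a b p j.1)
    by_cases h1 : (j : ℤ) < r
    · rw [if_pos h1, if_pos (by omega)]
    · by_cases h2 : (j : ℤ) = r
      · rw [if_neg h1, if_pos h2, if_pos (by omega)]
      · by_cases h3 : (j : ℤ) = r + 1
        · rw [if_neg h1, if_neg h2, if_neg (by omega), if_pos h3, h3]
        · rw [if_neg h1, if_neg h2, if_neg (by omega), if_neg h3]
  · show (if r < (j : ℤ) then 0 else if (j : ℤ) = r then pE a b p r else pE a b p j.1)
      = (if r + 1 < (j : ℤ) then 0 else if (j : ℤ) = r + 1 then 0 else pE a b p j.1)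
    by_cases h1 : (j : ℤ) < r
    · rw [if_neg (by omega), if_neg (by omega), if_neg (by omega), if_neg (by omega)]
    · by_cases h2 : (j : ℤ) = r
      · rw [if_neg (by omega), if_pos h2, if_neg (by omega), if_neg (by omega), h2]
      · by_cases h3 : (j : ℤ) = r + 1
        · rw [if_pos (by omega), if_neg (by omega), if_pos h3]
        · rw [if_pos (by omega), if_pos (by omega)]

lemma corner_memA {r : ℤ} (hbr : b ≤ r) (hra : r ≤ a) :
    pt a b p r 0 (pE a b p r) ∈ Sec a b p r := by
  left
  by_cases h1 : r = b
  · refine ⟨0, ?_⟩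
    unfold ptA
    rw [if_pos h1]
    rw [show pt a b p b 0 0 = pt a b p r 0 0 by rw [h1],
      show pE a b p r = 0 by rw [h1, pE_b]]
  · by_cases h2 : pE a b p r = ⊤
    · refine ⟨0, ?_⟩
      unfold ptA
      rw [if_neg h1, if_pos h2, h2]
    · refine ⟨0, ?_⟩
      unfold ptA
      rw [if_neg h1, if_neg h2, tsub_zero, min_eq_left zero_le]

lemma corner_memB {r : ℤ} (hbr : b ≤ r - 1) (hra : r ≤ a) :
    pt a b p r (pE a b p r) 0 ∈ Sec a b p r := by
  by_cases h1 : r = a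
  · right
    refine ⟨0, ?_⟩
    unfold ptB
    rw [if_pos h1]
    rw [show pt a b p a 0 0 = pt a b p r 0 0 by rw [h1],
      show pE a b p r = 0 by rw [h1, pE_a]]
  · by_cases h2 : pE a b p r = ⊤
    · right
      refine ⟨0, ?_⟩
      unfold ptB
      rw [if_neg h1, if_pos h2, h2]
    · left
      refine ⟨pE a b p r, ?_⟩
      unfold ptA
      rw [if_neg (by omega), if_neg h2, min_self, tsub_self]

lemma fib_preconnected (hab : b ≤ a) : IsPreconnected (Fib a b p) := by
  rw [fib_eq_union a b p hab]
  apply IsPreconnected.biUnion_of_chain (Set.ordConnected_Icc)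
  · intro r hr
    exact sec_preconnected a b p hr.1 hr.2
  · intro r hr hr'
    rw [Order.succ_eq_add_one] at hr' ⊢
    refine ⟨pt a b p r 0 (pE a b p r), corner_memA a b p hr.1 hr.2, ?_⟩
    rw [corner_eq a b p r]
    exact corner_memB a b p (by have h := hr.1; omega) hr'.2

end S2aux
namespace S2aux

variable (a b : ℤ) (p : Jspace a b) (ς : EReal ≃ₜ Set.Icc (0 : ℝ) 1)

lemma s_kbot (hab : b ≤ a) (hς : Monotone (sigmaR ς)) :
    sMap a b (sigmaR ς) (pt a b p b ⊤ 0) = b := by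
  rw [sMap_eq]
  have hterm : ∀ i ∈ Finset.Ico b a, sigmaR ς (SS a b (pt a b p b ⊤ 0) i) = 1 := by
    intro i hi
    have hi' := Finset.mem_Ico.1 hi
    have hA : AA a b (pt a b p b ⊤ 0) i = ⊤ := by
      rw [AA_pt_ge a b p le_rfl ⊤ 0 hi hi'.1, top_add]
    have hB : BB a b (pt a b p b ⊤ 0) i = 0 := BB_pt_ge a b p ⊤ 0 hi'.1 hi'.1
    have hSS : SS a b (pt a b p b ⊤ 0) i = ⊤ := by
      rw [SS, hA, hB]
      simp [sub_eq_add_neg]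
    rw [hSS, sigma_top ς hς]
  rw [Finset.sum_congr rfl hterm, Finset.sum_const, nsmul_eq_mul, mul_one,
    card_Ico_real a b hab]
  ring

lemma s_ktop (hab : b ≤ a) (hς : Monotone (sigmaR ς)) :
    sMap a b (sigmaR ς) (pt a b p a 0 ⊤) = a := by
  rw [sMap_eq]
  have hterm : ∀ i ∈ Finset.Ico b a, sigmaR ς (SS a b (pt a b p a 0 ⊤) i) = 0 := by
    intro i hi
    have hi' := Finset.mem_Ico.1 hi
    have hA : AA a b (pt a b p a 0 ⊤) i = 0 := AA_pt_lt a b p 0 ⊤ hi hi'.2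
    have hB : BB a b (pt a b p a 0 ⊤) i = ⊤ := by
      rw [BB_pt_lt a b p le_rfl 0 ⊤ hi hi'.2, top_add]
    have hSS : SS a b (pt a b p a 0 ⊤) i = ⊥ := by
      rw [SS, hA, hB]
      simp [sub_eq_add_neg]
    rw [hSS, sigma_bot ς hς]
  rw [Finset.sum_congr rfl hterm, Finset.sum_const]
  simp

lemma surjOn (hab : b ≤ a) (hς : Monotone (sigmaR ς)) :
    Set.SurjOn (sMap a b (sigmaR ς)) (Fib a b p) (Set.Icc (b : ℝ) (a : ℝ)) := by
  have h0 : pt a b p b ⊤ 0 ∈ Fib a b p :=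
    pt_mem a b p le_rfl hab (fun h => (lt_irrefl b h).elim)
  have h1 : pt a b p a 0 ⊤ ∈ Fib a b p :=
    pt_mem a b p hab le_rfl (fun _ h => (lt_irrefl a h).elim)
  have key := (fib_preconnected a b p hab).intermediate_value h0 h1 (contOn_s a b p ς)
  rwa [s_kbot a b p ς hab hς, s_ktop a b p ς hab hς] at key

end S2aux

theorem statement2' (a b : ℤ) (hab : b ≤ a)
    (ς : EReal ≃ₜ Set.Icc (0 : ℝ) 1) (hς : Monotone (sigmaR ς)) (p : Jspace a b) :
    Set.BijOn (sMap a b (sigmaR ς)) (KSet a b ∩ {k | deltaMap a b k = p})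
        (Set.Icc (b : ℝ) (a : ℝ)) ∧
      ∃ e : {k : KAmb a b // k ∈ KSet a b ∧ deltaMap a b k = p} ≃ₜ
          ↥(Set.Icc (b : ℝ) (a : ℝ)),
        ∀ k, (e k : ℝ) = sMap a b (sigmaR ς) (k : KAmb a b) := by
  have hmaps := S2aux.mapsTo a b p ς hab
  have hinj := S2aux.injOn a b p ς hς
  have hsurj := S2aux.surjOn a b p ς hab hς
  constructor
  · exact ⟨hmaps, hinj, hsurj⟩
  · haveI hcs : CompactSpace {k : KAmb a b // k ∈ KSet a b ∧ deltaMap a b k = p} :=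
      isCompact_iff_compactSpace.1 (S2aux.isCompact_fib a b p)
    let F : {k : KAmb a b // k ∈ KSet a b ∧ deltaMap a b k = p} →
        ↥(Set.Icc (b : ℝ) (a : ℝ)) :=
      fun k => ⟨sMap a b (sigmaR ς) k.1, hmaps k.2⟩
    have hFc : Continuous F := by
      apply Continuous.subtype_mk
      exact ContinuousOn.restrict (S2aux.contOn_s a b p ς)
    have hFbij : Function.Bijective F := by
      constructor
      · intro k k' h
        exact Subtype.ext (hinj k.2 k'.2 (congrArg Subtype.val h))
      · intro c
        obtain ⟨k, hk, hsk⟩ := hsurj c.2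
        exact ⟨⟨k, hk⟩, Subtype.ext hsk⟩
    exact ⟨Continuous.homeoOfEquivCompactToT2 (f := Equiv.ofBijective F hFbij) hFc,
      fun k => rfl⟩


/-- Let `a ≥ b` be integers and `ς : [-∞,∞] → [0,1]` an order-preserving
homeomorphism.  For every `p ∈ J(a,b)`, the restriction of `s_{ab}` to the fiber
`δ_{ab}⁻¹(p) ⊆ K(a;b)` is a bijection onto `[b,a]`, and moreover a homeomorphism, so every
fiber of `δ_{ab}` is homeomorphic to the closed interval `[b,a]`. -/
theorem statement2 (a b : ℤ) (hab : b ≤ a)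
    (ς : EReal ≃ₜ Set.Icc (0 : ℝ) 1) (hς : Monotone (sigmaR ς)) (p : Jspace a b) :
    Set.BijOn (sMap a b (sigmaR ς)) (KSet a b ∩ {k | deltaMap a b k = p})
        (Set.Icc (b : ℝ) (a : ℝ)) ∧
      ∃ e : {k : KAmb a b // k ∈ KSet a b ∧ deltaMap a b k = p} ≃ₜ
          ↥(Set.Icc (b : ℝ) (a : ℝ)),
        ∀ k, (e k : ℝ) = sMap a b (sigmaR ς) (k : KAmb a b) :=
  statement2' a b hab ς hς p
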